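/- (Theorem 3, robust sufficient condition) Let B be a real n×m matrix, C a real m×n matrix, and let 𝒟 = {Δ ∈ ℝ^m : Δⱼ⁻ ≤ Δⱼ ≤ Δⱼ⁺ for all j} with 0 ≤ Δⱼ⁻ ≤ Δⱼ⁺. Let J₂, J₄ be real symmetric n×n matrices with J₄ negative semidefinite and J₂ + κ̄² J₄ negative definite for some κ̄ > 0. Write J(Δ,κ) = B·diag(Δ)·C + κ² J₂ + κ⁴ J₄. Assume that for every Δ ∈ 𝒟, the characteristic polynomial of B·diag(Δ)·C has 0 as a root of multiplicity exactly one and all its other complex roots have negative real part. If there exists κ̂ > 0 such that det(−J(Δ,κ)) > 0 for all κ ∈ (0, κ̂) and all Δ ∈ 𝒟 (Ψ⁻ initially positive), and there exists κ₂ > 0 such that det(−J(Δ,κ₂)) < 0 for all Δ ∈ 𝒟 (Ψ⁺ has a negative sign change), then every Δ ∈ 𝒟 exhibits microphase separation. -/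

import Mathlib

open Matrix Polynomial

/-- The combined Jacobian `J(Δ,κ) = B ⬝ diag(Δ) ⬝ C + κ² J₂ + κ⁴ J₄`. -/
noncomputable def Jmat {n m : ℕ} (B : Matrix (Fin n) (Fin m) ℝ) (C : Matrix (Fin m) (Fin n) ℝ)
    (J2 J4 : Matrix (Fin n) (Fin n) ℝ) (Δ : Fin m → ℝ) (κ : ℝ) : Matrix (Fin n) (Fin n) ℝ :=
  B * Matrix.diagonal Δ * C + κ ^ 2 • J2 + κ ^ 4 • J4

/-- Every eigenvalue of the real matrix `M` (root in `ℂ` of its characteristic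
polynomial) has negative real part. -/
def AllEigNegRe {n : ℕ} (M : Matrix (Fin n) (Fin n) ℝ) : Prop :=
  ∀ μ : ℂ, ((M.charpoly).map (algebraMap ℝ ℂ)).IsRoot μ → μ.re < 0

/-- Some eigenvalue of the real matrix `M` has positive real part. -/
def SomeEigPosRe {n : ℕ} (M : Matrix (Fin n) (Fin n) ℝ) : Prop :=
  ∃ μ : ℂ, ((M.charpoly).map (algebraMap ℝ ℂ)).IsRoot μ ∧ 0 < μ.re

/-- The parameter `Δ` exhibits microphase separation: there exist
`0 < κ̂ < κ₁ < κ₂` such that all eigenvalues of `J(Δ,κ)` have negative real part for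
`κ ∈ (0,κ̂)`, some eigenvalue of `J(Δ,κ₁)` has positive real part, and all eigenvalues
of `J(Δ,κ₂)` have negative real part. -/
def Microphase {n m : ℕ} (B : Matrix (Fin n) (Fin m) ℝ) (C : Matrix (Fin m) (Fin n) ℝ)
    (J2 J4 : Matrix (Fin n) (Fin n) ℝ) (Δ : Fin m → ℝ) : Prop :=
  ∃ κhat κ1 κ2 : ℝ, 0 < κhat ∧ κhat < κ1 ∧ κ1 < κ2 ∧
    (∀ κ : ℝ, 0 < κ → κ < κhat → AllEigNegRe (Jmat B C J2 J4 Δ κ)) ∧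
    SomeEigPosRe (Jmat B C J2 J4 Δ κ1) ∧
    AllEigNegRe (Jmat B C J2 J4 Δ κ2)



open Matrix Polynomial Finset Filter


theorem my_eval_charpoly {n : ℕ} {R : Type*} [CommRing R] (M : Matrix (Fin n) (Fin n) R) (t : R) :
    (M.charpoly).eval t = (t • (1 : Matrix (Fin n) (Fin n) R) - M).det := by
  rw [charpoly, eval_det, matPolyEquiv_charmatrix]
  congr 1
  simp only [eval_sub, eval_X, eval_C, scalar_apply]
  congr 1
  ext i j
  simp [Matrix.diagonal, Matrix.one_apply, Matrix.smul_apply]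

theorem eval_charpoly_zero {n : ℕ} (M : Matrix (Fin n) (Fin n) ℝ) :
    (M.charpoly).eval 0 = (-M).det := by
  rw [my_eval_charpoly]; simp

theorem someEig_of_det_neg {n : ℕ} (M : Matrix (Fin n) (Fin n) ℝ)
    (hd : (-M).det < 0) :
    ∃ μ : ℂ, ((M.charpoly).map (algebraMap ℝ ℂ)).IsRoot μ ∧ 0 < μ.re := by
  have hn : 0 < n := by
    rcases Nat.eq_zero_or_pos n with h | h
    · exfalso; subst h
      rw [Matrix.det_fin_zero] at hd; linarith
    · exact h
  have hev0 : (M.charpoly).eval 0 < 0 := by rw [eval_charpoly_zero]; exact hd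
  have hdeg : 0 < (M.charpoly).degree := by
    rw [Matrix.charpoly_degree_eq_dim, Fintype.card_fin]
    exact_mod_cast hn
  have htop : Filter.Tendsto (fun x => (M.charpoly).eval x) Filter.atTop Filter.atTop :=
    Polynomial.tendsto_atTop_of_leadingCoeff_nonneg _ hdeg
      (by rw [(Matrix.charpoly_monic M).leadingCoeff]; norm_num)
  obtain ⟨x₀, hx₀⟩ := ((htop.eventually_ge_atTop 1).and (Filter.eventually_ge_atTop 1)).exists
  have hiv : (0:ℝ) ∈ Set.Ioo ((M.charpoly).eval 0) ((M.charpoly).eval x₀) :=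
    ⟨hev0, by linarith [hx₀.1]⟩
  have hsub := intermediate_value_Ioo (by linarith [hx₀.2] : (0:ℝ) ≤ x₀)
    ((M.charpoly).continuous.continuousOn)
  obtain ⟨x, hx, hxe⟩ := hsub hiv
  refine ⟨(x : ℂ), ?_, by simpa using hx.1⟩
  have : ((M.charpoly).map (algebraMap ℝ ℂ)).eval ((algebraMap ℝ ℂ) x) = 0 := by
    rw [eval_map, eval₂_at_apply]
    simp only at hxe
    rw [hxe, map_zero]
  simpa using this

noncomputable def DD (N : ℕ) (p : Polynomial ℂ) (a b : ℂ) : ℂ :=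
  ∑ k ∈ Finset.range N, p.coeff k * ∑ i ∈ Finset.range k, a ^ i * b ^ (k - 1 - i)

theorem DD_spec {N : ℕ} {p : Polynomial ℂ} (hp : p.natDegree < N) (a b : ℂ) :
    p.eval a - p.eval b = DD N p a b * (a - b) := by
  rw [eval_eq_sum_range' hp, eval_eq_sum_range' hp, DD, Finset.sum_mul, ← Finset.sum_sub_distrib]
  refine Finset.sum_congr rfl fun k _ => ?_
  rw [mul_assoc, geom_sum₂_mul, mul_sub]

theorem zero_geom : ∀ k : ℕ, 2 ≤ k → ∑ i ∈ Finset.range k, (0:ℂ) ^ i * 0 ^ (k - 1 - i) = 0 := by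
  intro k hk
  apply Finset.sum_eq_zero
  intro i hi
  rcases Nat.eq_zero_or_pos i with h | h
  · subst h
    rw [pow_zero, one_mul, zero_pow]
    omega
  · rw [zero_pow h.ne', zero_mul]

theorem DD_zero_zero {N : ℕ} (hN : 2 ≤ N) (p : Polynomial ℂ) : DD N p 0 0 = p.coeff 1 := by
  rw [DD]
  rw [show N = (N - 2) + 2 by omega]
  induction (N-2) with
  | zero => simp [Finset.sum_range_succ]
  | succ d ih =>
      rw [show d + 1 + 2 = (d + 2) + 1 by omega, Finset.sum_range_succ, ih,
        zero_geom (d+2) (by omega), mul_zero, add_zero]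

theorem DD_self {N : ℕ} {p : Polynomial ℂ} (hp : p.natDegree < N) (a : ℂ) :
    DD N p a a = p.derivative.eval a := by
  have hN : 1 ≤ N := Nat.one_le_iff_ne_zero.mpr (by omega)
  obtain ⟨M, rfl⟩ : ∃ M, N = M + 1 := ⟨N - 1, by omega⟩
  have hd : p.derivative.natDegree < M + 1 :=
    lt_of_le_of_lt (natDegree_derivative_le p) (by omega)
  rw [eval_eq_sum_range' hd, DD]
  have hin : ∀ k, ∑ i ∈ Finset.range k, a ^ i * a ^ (k - 1 - i) = (k : ℂ) * a ^ (k - 1) := by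
    intro k
    rw [Finset.sum_congr rfl (fun i hi => ?_), Finset.sum_const, Finset.card_range,
      nsmul_eq_mul]
    rw [← pow_add]
    congr 1
    have := Finset.mem_range.mp hi
    omega
  simp only [hin, coeff_derivative]
  rw [Finset.sum_range_succ' (fun k => p.coeff k * ((k:ℂ) * a ^ (k-1)))]
  rw [Finset.sum_range_succ (fun j => p.coeff (j+1) * ((j:ℂ)+1) * a ^ j)]
  rw [coeff_eq_zero_of_natDegree_lt (by omega : p.natDegree < M + 1)]
  simp only [Nat.cast_zero, zero_mul, mul_zero, add_zero, zero_add, Nat.cast_add, Nat.cast_one,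
    Nat.add_sub_cancel]
  refine Finset.sum_congr rfl fun i _ => by ring

theorem root_norm_le {p : Polynomial ℂ} (hm : p.Monic) {z : ℂ} (hz : p.eval z = 0) :
    ‖z‖ ≤ max 1 (∑ k ∈ Finset.range p.natDegree, ‖p.coeff k‖) := by
  set n := p.natDegree with hn
  rcases Nat.eq_zero_or_pos n with h0 | hpos
  · exfalso
    have h0' : p.natDegree = 0 := h0
    rw [Monic.natDegree_eq_zero hm] at h0'
    rw [h0'] at hz; simp at hz
  by_cases hz1 : ‖z‖ ≤ 1
  · exact le_trans hz1 (le_max_left _ _)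
  push_neg at hz1
  refine le_trans ?_ (le_max_right _ _)
  have hev : p.eval z = ∑ k ∈ Finset.range n, p.coeff k * z ^ k + z ^ n := by
    rw [eval_eq_sum_range' (show p.natDegree < n + 1 by omega), Finset.sum_range_succ]
    have : p.coeff n = 1 := hm.coeff_natDegree
    rw [this, one_mul]
  have hzn : z ^ n = -∑ k ∈ Finset.range n, p.coeff k * z ^ k := by
    rw [hev] at hz; linear_combination hz
  have h1 : ‖z‖ ^ n ≤ (∑ k ∈ Finset.range n, ‖p.coeff k‖) * ‖z‖ ^ (n - 1) := by
    calc ‖z‖ ^ n = ‖z ^ n‖ := (norm_pow z n).symm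
    _ = ‖∑ k ∈ Finset.range n, p.coeff k * z ^ k‖ := by rw [hzn, norm_neg]
    _ ≤ ∑ k ∈ Finset.range n, ‖p.coeff k * z ^ k‖ := norm_sum_le _ _
    _ ≤ ∑ k ∈ Finset.range n, ‖p.coeff k‖ * ‖z‖ ^ (n - 1) := by
        refine Finset.sum_le_sum fun k hk => ?_
        rw [norm_mul, norm_pow]
        refine mul_le_mul_of_nonneg_left ?_ (norm_nonneg _)
        exact pow_le_pow_right₀ (le_of_lt hz1) (by have := Finset.mem_range.mp hk; omega)
    _ = (∑ k ∈ Finset.range n, ‖p.coeff k‖) * ‖z‖ ^ (n - 1) := by rw [Finset.sum_mul]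
  have hpow : 0 < ‖z‖ ^ (n - 1) := pow_pos (lt_trans one_pos hz1) _
  have : ‖z‖ * ‖z‖ ^ (n - 1) ≤ (∑ k ∈ Finset.range n, ‖p.coeff k‖) * ‖z‖ ^ (n - 1) := by
    calc ‖z‖ * ‖z‖ ^ (n - 1) = ‖z‖ ^ n := by
          rw [← pow_succ']; congr 1; omega
    _ ≤ _ := h1
  exact le_of_mul_le_mul_right this hpow

theorem continuous_coeff_prod {ι X : Type*} [TopologicalSpace X] (s : Finset ι)
    (q : ι → X → Polynomial ℝ) (hq : ∀ i k, Continuous fun x => (q i x).coeff k) :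
    ∀ k, Continuous fun x => (∏ i ∈ s, q i x).coeff k := by
  classical
  induction s using Finset.induction_on with
  | empty =>
      intro k
      simp only [Finset.prod_empty, Polynomial.coeff_one]
      exact continuous_const
  | insert _ _ h ih =>
      intro k
      simp only [Finset.prod_insert h, Polynomial.coeff_mul]
      exact continuous_finset_sum _ fun x _ => (hq _ _).mul (ih _)

theorem continuous_charpoly_coeff {n : ℕ} (k : ℕ) :
    Continuous fun M : Matrix (Fin n) (Fin n) ℝ => (M.charpoly).coeff k := by
  classical
  have h : ∀ M : Matrix (Fin n) (Fin n) ℝ, M.charpoly.coeff k =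
      ∑ σ : Equiv.Perm (Fin n), ((Equiv.Perm.sign σ : ℤ) : ℝ) *
        (∏ i, charmatrix M (σ i) i).coeff k := by
    intro M
    rw [Matrix.charpoly, Matrix.det_apply, Polynomial.finset_sum_coeff]
    refine Finset.sum_congr rfl fun σ _ => ?_
    rw [Polynomial.coeff_smul, Units.smul_def, zsmul_eq_mul]
  simp only [h]
  refine continuous_finset_sum _ fun σ _ => Continuous.mul continuous_const ?_
  refine continuous_coeff_prod Finset.univ (fun i M => charmatrix M (σ i) i) (fun i k => ?_) k
  have hM : Continuous fun M : Matrix (Fin n) (Fin n) ℝ => M (σ i) i :=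
    (continuous_apply i).comp (continuous_apply (σ i))
  by_cases hij : σ i = i
  · simp only [hij, Matrix.charmatrix_apply_eq, Polynomial.coeff_sub, Polynomial.coeff_X,
      Polynomial.coeff_C]
    by_cases hk : k = 0 <;> simp [hk] <;> fun_prop
  · simp only [Matrix.charmatrix_apply_ne _ _ _ hij, Polynomial.coeff_neg, Polynomial.coeff_C]
    by_cases hk : k = 0 <;> simp [hk] <;> fun_prop

theorem allEigNegRe_of_negQuad {n : ℕ} (M : Matrix (Fin n) (Fin n) ℝ)
    (h : ∀ x : Fin n → ℝ, x ≠ 0 → x ⬝ᵥ M.mulVec x < 0)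
    (μ : ℂ) (hμ : ((M.charpoly).map (algebraMap ℝ ℂ)).IsRoot μ) : μ.re < 0 := by
  classical
  set Mc : Matrix (Fin n) (Fin n) ℂ := M.map (algebraMap ℝ ℂ) with hMc
  have hch : Mc.charpoly = (M.charpoly).map (algebraMap ℝ ℂ) :=
    Matrix.charpoly_map M (algebraMap ℝ ℂ)
  have hdet : (μ • (1 : Matrix (Fin n) (Fin n) ℂ) - Mc).det = 0 := by
    rw [← my_eval_charpoly, hch]; exact hμ
  obtain ⟨v, hv0, hv⟩ := (Matrix.exists_mulVec_eq_zero_iff).mpr hdet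
  have hMv : Mc.mulVec v = μ • v := by
    have := hv
    rw [Matrix.sub_mulVec, Matrix.smul_mulVec, Matrix.one_mulVec, sub_eq_zero] at this
    exact this.symm
  set a : Fin n → ℝ := fun i => (v i).re with ha
  set b : Fin n → ℝ := fun i => (v i).im with hb
  set T : ℝ := ∑ i, Complex.normSq (v i) with hT
  have hTpos : 0 < T := by
    obtain ⟨i, hi⟩ : ∃ i, v i ≠ 0 := by
      by_contra hcon
      push_neg at hcon
      exact hv0 (funext hcon)
    refine Finset.sum_pos' (fun j _ => Complex.normSq_nonneg _) ⟨i, Finset.mem_univ i, ?_⟩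
    exact Complex.normSq_pos.mpr hi
  set c : ℂ := ∑ i, (starRingEnd ℂ) (v i) * Mc.mulVec v i with hc
  have hc1 : c = μ * (T : ℂ) := by
    rw [hc, hMv]
    push_cast [hT]
    rw [Finset.mul_sum]
    refine Finset.sum_congr rfl fun i _ => ?_
    rw [Pi.smul_apply, smul_eq_mul, Complex.normSq_eq_conj_mul_self]
    ring
  have hc2 : c.re = a ⬝ᵥ M.mulVec a + b ⬝ᵥ M.mulVec b := by
    rw [hc, Complex.re_sum]
    have : ∀ i, ((starRingEnd ℂ) (v i) * Mc.mulVec v i).re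
        = ∑ j, M i j * (a i * a j + b i * b j) := by
      intro i
      rw [Matrix.mulVec, dotProduct, Finset.mul_sum, Complex.re_sum]
      refine Finset.sum_congr rfl fun j _ => ?_
      simp only [hMc, Matrix.map_apply]
      simp [Complex.mul_re, Complex.mul_im, ha, hb]
      ring
    rw [Finset.sum_congr rfl fun i _ => this i]
    rw [dotProduct, dotProduct]
    rw [← Finset.sum_add_distrib]
    refine Finset.sum_congr rfl fun i _ => ?_
    rw [Matrix.mulVec, dotProduct, Matrix.mulVec, dotProduct,
      Finset.mul_sum, Finset.mul_sum, ← Finset.sum_add_distrib]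
    refine Finset.sum_congr rfl fun j _ => by ring
  have hab : a ≠ 0 ∨ b ≠ 0 := by
    by_contra hcon
    push_neg at hcon
    apply hv0
    funext i
    have h1 : a i = 0 := by rw [hcon.1]; rfl
    have h2 : b i = 0 := by rw [hcon.2]; rfl
    exact Complex.ext h1 h2
  have hterm : ∀ x : Fin n → ℝ, x ⬝ᵥ M.mulVec x ≤ 0 ∨ (x ≠ 0 ∧ x ⬝ᵥ M.mulVec x < 0) := by
    intro x
    by_cases hx : x = 0
    · left; subst hx; simp
    · right; exact ⟨hx, h x hx⟩
  have hneg : c.re < 0 := by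
    rw [hc2]
    rcases hab with hA | hB
    · have h1 := h a hA
      have h2 : b ⬝ᵥ M.mulVec b ≤ 0 := by
        rcases hterm b with h' | h'
        · exact h'
        · exact le_of_lt h'.2
      linarith
    · have h1 := h b hB
      have h2 : a ⬝ᵥ M.mulVec a ≤ 0 := by
        rcases hterm a with h' | h'
        · exact h'
        · exact le_of_lt h'.2
      linarith
  have : c.re = μ.re * T := by
    rw [hc1]
    simp [Complex.mul_re]
  rw [this] at hneg
  by_contra hcon
  push_neg at hcon
  nlinarith

theorem real_root_aux {r : Polynomial ℝ} (hm : r.Monic) (h0 : 0 < r.eval 0)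
    {x : ℝ} (hx : 0 < x) (hroot : r.eval x = 0) :
    (∃ y, 0 < y ∧ y ≠ x ∧ r.eval y = 0) ∨ (X - C x)^2 ∣ r := by
  by_cases hdvd : (X - C x)^2 ∣ r
  · exact Or.inr hdvd
  left
  have hr0 : r ≠ 0 := hm.ne_zero
  have hfac : (X - C x) * (r /ₘ (X - C x)) = r :=
    (Polynomial.mul_divByMonic_eq_iff_isRoot).mpr hroot
  set s := r /ₘ (X - C x) with hs
  have hsx : s.eval x ≠ 0 := by
    intro hcon
    apply hdvd
    obtain ⟨t, ht⟩ := Polynomial.dvd_iff_isRoot.mpr hcon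
    refine ⟨t, ?_⟩
    rw [← hfac, ht]; ring
  have hsm : s.Monic := by
    have := hfac
    have hlc : r.leadingCoeff = (X - C x).leadingCoeff * s.leadingCoeff := by
      rw [← hfac, leadingCoeff_mul]
    rw [hm.leadingCoeff, (monic_X_sub_C x).leadingCoeff, one_mul] at hlc
    exact hlc.symm
  have hs0 : s.eval 0 < 0 := by
    have : r.eval 0 = (0 - x) * s.eval 0 := by rw [← hfac]; simp
    rw [this] at h0
    nlinarith
  have hsd : 0 < s.degree := by
    rcases Nat.eq_zero_or_pos s.natDegree with h | h
    · exfalso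
      rw [Monic.natDegree_eq_zero hsm] at h
      rw [h] at hs0; simp at hs0; linarith
    · rwa [← natDegree_pos_iff_degree_pos]
  have htop : Filter.Tendsto (fun t => s.eval t) Filter.atTop Filter.atTop :=
    Polynomial.tendsto_atTop_of_leadingCoeff_nonneg _ hsd (by rw [hsm.leadingCoeff]; norm_num)
  obtain ⟨y₀, hy₀⟩ := ((htop.eventually_ge_atTop 1).and (Filter.eventually_ge_atTop 1)).exists
  have hiv : (0:ℝ) ∈ Set.Ioo (s.eval 0) (s.eval y₀) := ⟨hs0, by linarith [hy₀.1]⟩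
  obtain ⟨y, hy, hye⟩ := intermediate_value_Ioo (by linarith [hy₀.2] : (0:ℝ) ≤ y₀)
    (s.continuous.continuousOn) hiv
  simp only at hye
  refine ⟨y, hy.1, ?_, ?_⟩
  · intro hcon; rw [hcon] at hye; exact hsx hye
  · rw [← hfac]; simp [hye]

-- conj of eval of mapped real polynomial
theorem eval_map_conj (r : Polynomial ℝ) (z : ℂ) :
    ((r.map (algebraMap ℝ ℂ)).eval ((starRingEnd ℂ) z))
      = (starRingEnd ℂ) ((r.map (algebraMap ℝ ℂ)).eval z) := by
  rw [eval_map, eval_map, hom_eval₂]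
  congr 1
  ext x
  simp

theorem eval_map_ofReal (r : Polynomial ℝ) (x : ℝ) :
    (r.map (algebraMap ℝ ℂ)).eval ((x : ℝ) : ℂ) = ((r.eval x : ℝ) : ℂ) := by
  have := eval₂_at_apply (p := r) (algebraMap ℝ ℂ) x
  rw [eval_map]
  simpa using this

theorem roots_local {n : ℕ} (P : ℕ → Polynomial ℂ) (Pl : Polynomial ℂ)
    (hm : ∀ j, (P j).Monic) (hd : ∀ j, (P j).natDegree = n)
    (hdl : Pl.natDegree = n)
    (hconv : ∀ k, Tendsto (fun j => (P j).coeff k) atTop (nhds (Pl.coeff k)))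
    (hstable : ∀ z : ℂ, Pl.IsRoot z → z ≠ 0 → z.re < 0)
    {ε : ℝ} (hε : 0 < ε) :
    ∀ᶠ j in atTop, ∀ z : ℂ, (P j).IsRoot z → 0 ≤ z.re → ‖z‖ < ε := by
  classical
  set T : ℝ := ∑ k ∈ Finset.range n, ‖Pl.coeff k‖ with hT
  set R : ℝ := max 1 (T + 1) with hR
  have hR1 : (1:ℝ) ≤ R := le_max_left _ _
  have hSj : Tendsto (fun j => ∑ k ∈ Finset.range n, ‖(P j).coeff k‖) atTop (nhds T) := by
    rw [hT]
    exact tendsto_finset_sum _ fun k _ => (hconv k).norm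
  have ev1 : ∀ᶠ j in atTop, ∑ k ∈ Finset.range n, ‖(P j).coeff k‖ < T + 1 :=
    hSj.eventually_lt_const (by linarith)
  have hbnd : ∀ j, (∑ k ∈ Finset.range n, ‖(P j).coeff k‖ < T + 1) →
      ∀ z : ℂ, (P j).IsRoot z → ‖z‖ ≤ R := by
    intro j hj z hz
    have := root_norm_le (hm j) hz
    rw [hd j] at this
    refine le_trans this (max_le_max le_rfl (le_of_lt hj))
  set K : Set ℂ := Metric.closedBall 0 R ∩ {z : ℂ | ε ≤ ‖z‖ ∧ 0 ≤ z.re} with hK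
  have hKc : IsCompact K := by
    refine (isCompact_closedBall 0 R).inter_right ?_
    exact IsClosed.inter (isClosed_le continuous_const continuous_norm)
      (isClosed_le continuous_const Complex.continuous_re)
  have hKnoroot : ∀ z ∈ K, Pl.eval z ≠ 0 := by
    rintro z ⟨-, hz1, hz2⟩ hcon
    have hz0 : z ≠ 0 := by
      intro h; rw [h] at hz1; simp at hz1; linarith
    exact absurd (hstable z hcon hz0) (not_lt.mpr hz2)
  -- uniform positive lower bound on K (or K empty)
  rcases Set.eq_empty_or_nonempty K with hKe | hKne
  · filter_upwards [ev1] with j hj z hz hre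
    by_contra hcon
    push_neg at hcon
    have hzR : ‖z‖ ≤ R := hbnd j hj z hz
    have : z ∈ K := ⟨by simpa [Metric.mem_closedBall] using hzR, hcon, hre⟩
    rw [hKe] at this
    exact this
  · obtain ⟨z₀, hz₀K, hz₀min⟩ := hKc.exists_isMinOn hKne
      ((continuous_norm.comp Pl.continuous).continuousOn)
    set δ : ℝ := ‖Pl.eval z₀‖ with hδ
    have hδpos : 0 < δ := by
      rw [hδ, norm_pos_iff]
      exact hKnoroot z₀ hz₀K
    have hE : Tendsto (fun j => ∑ k ∈ Finset.range (n+1),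
        ‖(P j).coeff k - Pl.coeff k‖ * R ^ k) atTop (nhds 0) := by
      have : ∀ k ∈ Finset.range (n+1), Tendsto
          (fun j => ‖(P j).coeff k - Pl.coeff k‖ * R ^ k) atTop (nhds 0) := by
        intro k _
        have h1 : Tendsto (fun j => (P j).coeff k - Pl.coeff k) atTop (nhds 0) := by
          simpa using (hconv k).sub (tendsto_const_nhds (x := Pl.coeff k))
        simpa using (h1.norm.mul_const (R ^ k))
      have := tendsto_finset_sum (Finset.range (n+1)) this
      simpa using this
    have ev2 : ∀ᶠ j in atTop, ∑ k ∈ Finset.range (n+1),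
        ‖(P j).coeff k - Pl.coeff k‖ * R ^ k < δ := hE.eventually_lt_const hδpos
    filter_upwards [ev1, ev2] with j hj1 hj2 z hz hre
    by_contra hcon
    push_neg at hcon
    have hzR : ‖z‖ ≤ R := hbnd j hj1 z hz
    have hzK : z ∈ K := ⟨by simpa [Metric.mem_closedBall] using hzR, hcon, hre⟩
    have hlow : δ ≤ ‖Pl.eval z‖ := hz₀min hzK
    have hdiff : ‖Pl.eval z‖ ≤ ∑ k ∈ Finset.range (n+1),
        ‖(P j).coeff k - Pl.coeff k‖ * R ^ k := by
      have heq : Pl.eval z = -((P j).eval z - Pl.eval z) := by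
        rw [hz]; ring
      rw [heq, norm_neg]
      rw [eval_eq_sum_range' (n := n+1) (by rw [hd j]; omega) z,
        eval_eq_sum_range' (n := n+1) (by rw [hdl]; omega) z, ← Finset.sum_sub_distrib]
      refine le_trans (norm_sum_le _ _) (Finset.sum_le_sum fun k _ => ?_)
      rw [← sub_mul, norm_mul, norm_pow]
      exact mul_le_mul_of_nonneg_left (pow_le_pow_left₀ (norm_nonneg z) hzR k)
        (norm_nonneg _)
    linarith

theorem key_lemma {n : ℕ} (hn : 0 < n) (q : ℕ → Polynomial ℝ) (ql : Polynomial ℝ)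
    (hqm : ∀ j, (q j).Monic) (hqd : ∀ j, (q j).natDegree = n)
    (hlm : ql.Monic) (hld : ql.natDegree = n)
    (hconv : ∀ k, Tendsto (fun j => (q j).coeff k) atTop (nhds (ql.coeff k)))
    (hq0 : ∀ j, 0 < (q j).eval 0)
    (hmult : ((ql.map (algebraMap ℝ ℂ))).rootMultiplicity 0 = 1)
    (hstable : ∀ z : ℂ, (ql.map (algebraMap ℝ ℂ)).IsRoot z → z ≠ 0 → z.re < 0)
    (hbad : ∀ j, ∃ μ : ℂ, ((q j).map (algebraMap ℝ ℂ)).IsRoot μ ∧ 0 ≤ μ.re) : False := by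
  classical
  have hPm : ∀ j, ((q j).map (algebraMap ℝ ℂ)).Monic := fun j => (hqm j).map _
  have hPd : ∀ j, ((q j).map (algebraMap ℝ ℂ)).natDegree = n := fun j => by
    rw [(hqm j).natDegree_map]; exact hqd j
  have hPlm : (ql.map (algebraMap ℝ ℂ)).Monic := hlm.map _
  have hPld : (ql.map (algebraMap ℝ ℂ)).natDegree = n := by
    rw [hlm.natDegree_map]; exact hld
  have hPconv : ∀ k, Tendsto (fun j => ((q j).map (algebraMap ℝ ℂ)).coeff k) atTop
      (nhds ((ql.map (algebraMap ℝ ℂ)).coeff k)) := by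
    intro k
    simp only [coeff_map]
    exact (Complex.continuous_ofReal.tendsto _).comp (hconv k)
  have hPl0 : (ql.map (algebraMap ℝ ℂ)) ≠ 0 := hPlm.ne_zero
  have hsel : ∀ j, ∃ a b : ℂ, 0 ≤ a.re ∧ 0 ≤ b.re ∧
      ((q j).map (algebraMap ℝ ℂ)).IsRoot a ∧ ((q j).map (algebraMap ℝ ℂ)).IsRoot b ∧
      DD (n+1) ((q j).map (algebraMap ℝ ℂ)) a b = 0 := by
    intro j
    obtain ⟨μ, hμroot, hμre⟩ := hbad j
    have hdeg : ((q j).map (algebraMap ℝ ℂ)).natDegree < n + 1 := by rw [hPd j]; omega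
    by_cases him : μ.im = 0
    · have hμ : μ = ((μ.re : ℝ) : ℂ) := by apply Complex.ext <;> simp [him]
      rcases eq_or_lt_of_le hμre with h0 | hpos
      · exfalso
        have hr : (q j).eval μ.re = 0 := by
          have h := hμroot
          rw [IsRoot, hμ, eval_map_ofReal] at h
          exact_mod_cast h
        rw [← h0] at hr
        linarith [hq0 j]
      · set x := μ.re with hx
        have hroot : (q j).eval x = 0 := by
          have h := hμroot
          rw [IsRoot, hμ, eval_map_ofReal] at h
          exact_mod_cast h
        rcases real_root_aux (hqm j) (hq0 j) hpos hroot with ⟨y, hy, hyx, hyroot⟩ | hdvd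
        · refine ⟨((x:ℝ):ℂ), ((y:ℝ):ℂ), by simpa using le_of_lt hpos,
            by simpa using le_of_lt hy, ?_, ?_, ?_⟩
          · rw [IsRoot, eval_map_ofReal, hroot]; simp
          · rw [IsRoot, eval_map_ofReal, hyroot]; simp
          · have hd := DD_spec hdeg ((x:ℝ):ℂ) ((y:ℝ):ℂ)
            rw [eval_map_ofReal, eval_map_ofReal, hroot, hyroot] at hd
            simp only [Complex.ofReal_zero, sub_zero, sub_self, zero_sub] at hd
            have hxy : ((x:ℝ):ℂ) - ((y:ℝ):ℂ) ≠ 0 := by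
              rw [sub_ne_zero]
              exact_mod_cast fun h => hyx (by exact_mod_cast h.symm)
            rcases mul_eq_zero.mp hd.symm with h | h
            · exact h
            · exact absurd h hxy
        · refine ⟨((x:ℝ):ℂ), ((x:ℝ):ℂ), by simpa using le_of_lt hpos,
            by simpa using le_of_lt hpos, ?_, ?_, ?_⟩
          · rw [IsRoot, eval_map_ofReal, hroot]; simp
          · rw [IsRoot, eval_map_ofReal, hroot]; simp
          · rw [DD_self hdeg]
            obtain ⟨t, ht⟩ := hdvd
            have hPfac : (q j).map (algebraMap ℝ ℂ)
                = (X - Polynomial.C ((x:ℝ):ℂ))^2 * (t.map (algebraMap ℝ ℂ)) := by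
              rw [ht, Polynomial.map_mul, Polynomial.map_pow, Polynomial.map_sub, map_X, map_C]
              norm_num
            rw [hPfac]
            simp [derivative_mul, derivative_pow]
    · refine ⟨μ, (starRingEnd ℂ) μ, hμre, by simpa using hμre, hμroot, ?_, ?_⟩
      · rw [IsRoot, eval_map_conj, hμroot, map_zero]
      · have hd := DD_spec hdeg μ ((starRingEnd ℂ) μ)
        have hcr : ((q j).map (algebraMap ℝ ℂ)).eval ((starRingEnd ℂ) μ) = 0 := by
          rw [eval_map_conj, hμroot, map_zero]
        rw [hμroot, hcr, sub_zero] at hd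
        have hμμ : μ - (starRingEnd ℂ) μ ≠ 0 := by
          rw [sub_ne_zero]
          intro h
          apply him
          have := congrArg Complex.im h
          simp at this
          linarith
        rcases mul_eq_zero.mp hd.symm with h | h
        · exact h
        · exact absurd h hμμ
  choose a b hare hbre haroot hbroot hDD using hsel
  have hlim : ∀ (c : ℕ → ℂ), (∀ j, ((q j).map (algebraMap ℝ ℂ)).IsRoot (c j)) →
      (∀ j, 0 ≤ (c j).re) → Tendsto c atTop (nhds 0) := by
    intro c hcroot hcre
    rw [Metric.tendsto_atTop]
    intro ε hε
    have := roots_local (fun j => (q j).map (algebraMap ℝ ℂ)) (ql.map (algebraMap ℝ ℂ))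
      hPm hPd hPld hPconv hstable hε
    rw [eventually_atTop] at this
    obtain ⟨N, hN⟩ := this
    exact ⟨N, fun j hj => by
      rw [dist_eq_norm, sub_zero]
      exact hN j hj (c j) (hcroot j) (hcre j)⟩
  have halim : Tendsto a atTop (nhds 0) := hlim a haroot hare
  have hblim : Tendsto b atTop (nhds 0) := hlim b hbroot hbre
  have hDDlim : Tendsto (fun j => DD (n+1) ((q j).map (algebraMap ℝ ℂ)) (a j) (b j)) atTop
      (nhds (DD (n+1) (ql.map (algebraMap ℝ ℂ)) 0 0)) := by
    unfold DD
    refine tendsto_finset_sum _ fun k _ => ?_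
    refine (hPconv k).mul (tendsto_finset_sum _ fun i _ => ?_)
    exact ((halim.pow i).mul (hblim.pow (k - 1 - i)))
  have hDD0 : DD (n+1) (ql.map (algebraMap ℝ ℂ)) 0 0 = 0 := by
    have h2 : Tendsto (fun j => DD (n+1) ((q j).map (algebraMap ℝ ℂ)) (a j) (b j))
        atTop (nhds 0) := by
      simp only [hDD]
      exact tendsto_const_nhds
    exact tendsto_nhds_unique hDDlim h2
  have hc1 : (ql.map (algebraMap ℝ ℂ)).coeff 1 = 0 := by
    rw [← DD_zero_zero (N := n+1) (by omega) (ql.map (algebraMap ℝ ℂ)), hDD0]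
  have hc0 : (ql.map (algebraMap ℝ ℂ)).coeff 0 = 0 := by
    have hroot0 : (ql.map (algebraMap ℝ ℂ)).IsRoot 0 := by
      rw [← Polynomial.rootMultiplicity_pos hPl0, hmult]
      omega
    rw [Polynomial.coeff_zero_eq_eval_zero]
    exact hroot0
  have hdvd2 : (X - Polynomial.C (0:ℂ))^2 ∣ (ql.map (algebraMap ℝ ℂ)) := by
    rw [map_zero, sub_zero, Polynomial.X_pow_dvd_iff]
    intro d hd2
    interval_cases d
    · exact hc0
    · exact hc1
  have h2le : 2 ≤ (ql.map (algebraMap ℝ ℂ)).rootMultiplicity 0 :=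
    (Polynomial.le_rootMultiplicity_iff hPl0).mpr hdvd2
  rw [hmult] at h2le
  omega

theorem quad_cont {n : ℕ} (M : Matrix (Fin n) (Fin n) ℝ) :
    Continuous fun x : Fin n → ℝ => x ⬝ᵥ M.mulVec x := by
  have : ∀ x : Fin n → ℝ, x ⬝ᵥ M.mulVec x = ∑ i, x i * ∑ j, M i j * x j := by
    intro x; rfl
  simp only [this]
  refine continuous_finset_sum _ fun i _ => (continuous_apply i).mul ?_
  exact continuous_finset_sum _ fun j _ => continuous_const.mul (continuous_apply j)

theorem quad_smul {n : ℕ} (M : Matrix (Fin n) (Fin n) ℝ) (t : ℝ) (x : Fin n → ℝ) :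
    (t • x) ⬝ᵥ M.mulVec (t • x) = t^2 * (x ⬝ᵥ M.mulVec x) := by
  rw [Matrix.mulVec_smul, smul_dotProduct, dotProduct_smul]
  simp [smul_eq_mul]; ring

theorem quad_large {n : ℕ} (hn : 0 < n) (A J2 J4 : Matrix (Fin n) (Fin n) ℝ)
    (hJ4 : ∀ x : Fin n → ℝ, x ⬝ᵥ J4.mulVec x ≤ 0) (κbar : ℝ) (hκ : 0 < κbar)
    (hneg : ∀ x : Fin n → ℝ, x ≠ 0 → x ⬝ᵥ (J2 + κbar^2 • J4).mulVec x < 0) (K0 : ℝ) :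
    ∃ κ : ℝ, K0 < κ ∧ ∀ x : Fin n → ℝ, x ≠ 0 →
      x ⬝ᵥ (A + κ^2 • J2 + κ^4 • J4).mulVec x < 0 := by
  classical
  set S : Set (Fin n → ℝ) := Metric.sphere 0 1 with hS
  have hScomp : IsCompact S := isCompact_sphere 0 1
  have hSne : S.Nonempty := by
    refine ⟨Pi.single ⟨0, hn⟩ 1, ?_⟩
    simp [hS, Metric.mem_sphere, dist_eq_norm, Pi.norm_single]
  obtain ⟨xc, hxcS, hxcmax⟩ := hScomp.exists_isMaxOn hSne (quad_cont (J2 + κbar^2 • J4)).continuousOn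
  obtain ⟨xK, hxKS, hxKmax⟩ := hScomp.exists_isMaxOn hSne (quad_cont A).continuousOn
  set c : ℝ := -(xc ⬝ᵥ (J2 + κbar^2 • J4).mulVec xc) with hc
  set K : ℝ := xK ⬝ᵥ A.mulVec xK with hK
  have hsne0 : ∀ x ∈ S, x ≠ 0 := by
    intro x hx h0
    rw [h0] at hx
    simp [hS] at hx
  have hcpos : 0 < c := by
    rw [hc, neg_pos]
    exact hneg xc (hsne0 xc hxcS)
  set κ : ℝ := max (max κbar (K0+1)) (Real.sqrt ((K+1)/c) + 1) with hκdef
  have hκK0 : K0 < κ := lt_of_lt_of_le (by linarith) (le_trans (le_max_right κbar (K0+1)) (le_max_left _ _))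
  have hκbar2 : κbar ≤ κ := le_trans (le_max_left _ _) (le_max_left _ _)
  have hκsq : (K+1)/c ≤ κ^2 := by
    have h1 : Real.sqrt ((K+1)/c) ≤ κ := le_trans (by linarith [Real.sqrt_nonneg ((K+1)/c)]) (le_max_right _ _)
    have h2 : 0 ≤ κ := le_trans (Real.sqrt_nonneg _) (by linarith [Real.sqrt_nonneg ((K+1)/c)])
    rcases le_or_gt 0 ((K+1)/c) with h | h
    · calc (K+1)/c = Real.sqrt ((K+1)/c) ^ 2 := (Real.sq_sqrt h).symm
        _ ≤ κ^2 := by nlinarith [Real.sqrt_nonneg ((K+1)/c)]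
    · nlinarith
  refine ⟨κ, hκK0, fun x hx => ?_⟩
  -- reduce to unit sphere
  have hxn : 0 < ‖x‖ := norm_pos_iff.mpr hx
  set u : Fin n → ℝ := ‖x‖⁻¹ • x with hu
  have huS : u ∈ S := by
    simp [hS, Metric.mem_sphere, dist_eq_norm, hu, norm_smul, abs_of_pos (inv_pos.mpr hxn),
      inv_mul_cancel₀ (ne_of_gt hxn)]
  have hxu : x = ‖x‖ • u := by
    rw [hu, smul_smul, mul_inv_cancel₀ (ne_of_gt hxn), one_smul]
  have hscale : ∀ M : Matrix (Fin n) (Fin n) ℝ,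
      x ⬝ᵥ M.mulVec x = ‖x‖^2 * (u ⬝ᵥ M.mulVec u) := by
    intro M
    conv_lhs => rw [hxu]
    exact quad_smul M _ u
  rw [hscale]
  have hsplit : u ⬝ᵥ (A + κ^2 • J2 + κ^4 • J4).mulVec u
      = u ⬝ᵥ A.mulVec u + κ^2 * (u ⬝ᵥ J2.mulVec u) + κ^4 * (u ⬝ᵥ J4.mulVec u) := by
    rw [Matrix.add_mulVec, Matrix.add_mulVec, dotProduct_add, dotProduct_add,
      Matrix.smul_mulVec, Matrix.smul_mulVec, dotProduct_smul,
      dotProduct_smul]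
    simp [smul_eq_mul]
  have hbar : u ⬝ᵥ J2.mulVec u + κbar^2 * (u ⬝ᵥ J4.mulVec u) ≤ -c := by
    have hle : u ⬝ᵥ (J2 + κbar^2 • J4).mulVec u ≤ xc ⬝ᵥ (J2 + κbar^2 • J4).mulVec xc :=
      hxcmax huS
    have hexp : u ⬝ᵥ (J2 + κbar^2 • J4).mulVec u
        = u ⬝ᵥ J2.mulVec u + κbar^2 * (u ⬝ᵥ J4.mulVec u) := by
      rw [Matrix.add_mulVec, dotProduct_add, Matrix.smul_mulVec,
        dotProduct_smul]
      simp [smul_eq_mul]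
    have hceq : -c = xc ⬝ᵥ (J2 + κbar^2 • J4).mulVec xc := by rw [hc]; ring
    rw [hceq]
    rw [hexp] at hle
    linarith
  have hKbnd : u ⬝ᵥ A.mulVec u ≤ K := hxKmax huS
  have hJ4u : u ⬝ᵥ J4.mulVec u ≤ 0 := hJ4 u
  have hκ2 : κbar^2 ≤ κ^2 := by nlinarith
  have hmain : u ⬝ᵥ A.mulVec u + κ^2 * (u ⬝ᵥ J2.mulVec u) + κ^4 * (u ⬝ᵥ J4.mulVec u) < 0 := by
    have h1 : κ^2 * (u ⬝ᵥ J2.mulVec u) + κ^4 * (u ⬝ᵥ J4.mulVec u)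
        = κ^2 * ((u ⬝ᵥ J2.mulVec u) + κ^2 * (u ⬝ᵥ J4.mulVec u)) := by ring
    have h2 : (u ⬝ᵥ J2.mulVec u) + κ^2 * (u ⬝ᵥ J4.mulVec u)
        ≤ (u ⬝ᵥ J2.mulVec u) + κbar^2 * (u ⬝ᵥ J4.mulVec u) := by nlinarith
    have h3 : (u ⬝ᵥ J2.mulVec u) + κ^2 * (u ⬝ᵥ J4.mulVec u) ≤ -c := le_trans h2 hbar
    have hκ2pos : 0 < κ^2 := by nlinarith
    have h4 : κ^2 * ((u ⬝ᵥ J2.mulVec u) + κ^2 * (u ⬝ᵥ J4.mulVec u)) ≤ κ^2 * (-c) :=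
      mul_le_mul_of_nonneg_left h3 (le_of_lt hκ2pos)
    have h5 : K + 1 ≤ κ^2 * c := by
      rw [div_le_iff₀ hcpos] at hκsq
      linarith [hκsq]
    nlinarith
  nlinarith [sq_nonneg ‖x‖, hmain, mul_pos (mul_pos hxn hxn) (neg_pos.mpr hmain)]


/-- (Theorem 3, robust sufficient condition) Under the structural assumptions on
`J₂, J₄` and on the spectrum of `B ⬝ diag(Δ) ⬝ C` for all `Δ ∈ 𝒟`, if
`Ψ⁻(κ) = min_{Δ ∈ 𝒟} det (-J(Δ,κ))` is initially positive and there is `κ₂ > 0` with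
`det (-J(Δ,κ₂)) < 0` for all `Δ ∈ 𝒟` (`Ψ⁺` has a negative sign change), then every
`Δ ∈ 𝒟` exhibits microphase separation. -/
theorem stmt12 (n m : ℕ) (B : Matrix (Fin n) (Fin m) ℝ) (C : Matrix (Fin m) (Fin n) ℝ)
    (Δlo Δhi : Fin m → ℝ) (hbounds : ∀ j, 0 ≤ Δlo j ∧ Δlo j ≤ Δhi j)
    (J2 J4 : Matrix (Fin n) (Fin n) ℝ) (hJ2 : J2.IsSymm) (hJ4 : J4.IsSymm)
    (hJ4nsd : ∀ x : Fin n → ℝ, x ⬝ᵥ J4.mulVec x ≤ 0)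
    (hκbar : ∃ κbar : ℝ, 0 < κbar ∧
      ∀ x : Fin n → ℝ, x ≠ 0 → x ⬝ᵥ (J2 + κbar ^ 2 • J4).mulVec x < 0)
    (hspec : ∀ Δ : Fin m → ℝ, (∀ j, Δlo j ≤ Δ j ∧ Δ j ≤ Δhi j) →
      (((B * Matrix.diagonal Δ * C).charpoly).map (algebraMap ℝ ℂ)).rootMultiplicity 0 = 1 ∧
      (∀ z : ℂ, (((B * Matrix.diagonal Δ * C).charpoly).map (algebraMap ℝ ℂ)).IsRoot z →
        z ≠ 0 → z.re < 0))
    (hPsiMinusInitPos : ∃ κhat : ℝ, 0 < κhat ∧ ∀ κ : ℝ, 0 < κ → κ < κhat →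
      ∀ Δ : Fin m → ℝ, (∀ j, Δlo j ≤ Δ j ∧ Δ j ≤ Δhi j) →
        0 < (-(Jmat B C J2 J4 Δ κ)).det)
    (hPsiPlusNeg : ∃ κ2 : ℝ, 0 < κ2 ∧ ∀ Δ : Fin m → ℝ,
      (∀ j, Δlo j ≤ Δ j ∧ Δ j ≤ Δhi j) → (-(Jmat B C J2 J4 Δ κ2)).det < 0) :
    ∀ Δ : Fin m → ℝ, (∀ j, Δlo j ≤ Δ j ∧ Δ j ≤ Δhi j) → Microphase B C J2 J4 Δ := by
  obtain ⟨κbar, hκbarpos, hκbarneg⟩ := hκbar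
  obtain ⟨κhat0, hκhat0pos, hPsiM⟩ := hPsiMinusInitPos
  obtain ⟨κtwo, hκtwopos, hPsiP⟩ := hPsiPlusNeg
  intro Δ hΔ
  have hn : 0 < n := by
    rcases Nat.eq_zero_or_pos n with h0 | h
    · exfalso
      subst h0
      have := hPsiP Δ hΔ
      rw [Matrix.det_fin_zero] at this
      linarith
    · exact h
  obtain ⟨hmult, hstable⟩ := hspec Δ hΔ
  have hJcont : Continuous fun κ : ℝ => Jmat B C J2 J4 Δ κ := by
    unfold Jmat
    apply continuous_pi; intro i; apply continuous_pi; intro j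
    simp only [Matrix.add_apply, Matrix.smul_apply, smul_eq_mul]
    fun_prop
  have hJ0 : Jmat B C J2 J4 Δ 0 = B * Matrix.diagonal Δ * C := by
    unfold Jmat; norm_num
  have hsmall : ∃ κh : ℝ, 0 < κh ∧ ∀ κ : ℝ, 0 < κ → κ < κh →
      AllEigNegRe (Jmat B C J2 J4 Δ κ) := by
    by_contra hcon
    push_neg at hcon
    have hsel : ∀ j : ℕ, ∃ κ : ℝ, 0 < κ ∧ κ < min κhat0 (1/((j:ℝ)+1)) ∧
        ¬ AllEigNegRe (Jmat B C J2 J4 Δ κ) := by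
      intro j
      obtain ⟨κ, hκpos, hκlt, hbadm⟩ := hcon (min κhat0 (1/((j:ℝ)+1)))
        (lt_min hκhat0pos (by positivity))
      exact ⟨κ, hκpos, hκlt, hbadm⟩
    choose κs hκspos hκslt hκsbad using hsel
    have hκstend : Tendsto κs atTop (nhds 0) := by
      refine squeeze_zero (fun j => le_of_lt (hκspos j))
        (fun j => le_of_lt (lt_of_lt_of_le (hκslt j) (min_le_right _ _))) ?_
      exact tendsto_one_div_add_atTop_nhds_zero_nat
    refine key_lemma hn (fun j => (Jmat B C J2 J4 Δ (κs j)).charpoly)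
      ((B * Matrix.diagonal Δ * C).charpoly)
      (fun j => Matrix.charpoly_monic _)
      (fun j => by rw [Matrix.charpoly_natDegree_eq_dim, Fintype.card_fin])
      (Matrix.charpoly_monic _)
      (by rw [Matrix.charpoly_natDegree_eq_dim, Fintype.card_fin])
      (fun k => ?_) (fun j => ?_) hmult hstable (fun j => ?_)
    · have h1 : Tendsto (fun κ : ℝ => ((Jmat B C J2 J4 Δ κ).charpoly).coeff k) (nhds 0)
          (nhds (((Jmat B C J2 J4 Δ 0).charpoly).coeff k)) :=
        ((continuous_charpoly_coeff k).comp hJcont).tendsto 0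
      rw [hJ0] at h1
      exact h1.comp hκstend
    · rw [eval_charpoly_zero]
      exact hPsiM (κs j) (hκspos j) (lt_of_lt_of_le (hκslt j) (min_le_left _ _)) Δ hΔ
    · have := hκsbad j
      unfold AllEigNegRe at this
      push_neg at this
      obtain ⟨μ, hμroot, hμre⟩ := this
      exact ⟨μ, hμroot, hμre⟩
  obtain ⟨κh, hκhpos, hall⟩ := hsmall
  obtain ⟨κbig, hκbiggt, hκbigquad⟩ := quad_large hn (B * Matrix.diagonal Δ * C) J2 J4
    hJ4nsd κbar hκbarpos hκbarneg κtwo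
  refine ⟨min κh κtwo / 2, κtwo, κbig, by positivity, ?_, hκbiggt, ?_, ?_, ?_⟩
  · have := min_le_right κh κtwo
    linarith
  · intro κ hκpos hκlt
    refine hall κ hκpos ?_
    have := min_le_left κh κtwo
    linarith
  · exact someEig_of_det_neg _ (hPsiP Δ hΔ)
  · intro μ hμ
    refine allEigNegRe_of_negQuad _ (fun x hx => ?_) μ hμ
    exact hκbigquad x hx
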